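/- Suppose next-token consistency holds at every time t with 1 ≤ t ≤ T−1 and transition consistency holds at every time t with 1 ≤ t ≤ T−2. Then for every t with 1 ≤ t ≤ T−1, the σ-algebras σ(X_{t+1:T}) and σ(X_{1:t}) are conditionally independent given σ(h_t). -/

import Mathlib

open MeasureTheory ProbabilityTheory

noncomputable section

/-- The tuple of tokens `(X_{s+1}, …, X_{s+n})`. -/
def tup {Ω 𝒳 : Type*} (X : ℕ → Ω → 𝒳) (s n : ℕ) (ω : Ω) : Fin n → 𝒳 :=
  fun i => X (s + 1 + (i : ℕ)) ω

/-- Real-valued indicator of a set. -/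
def ind {Ω : Type*} (A : Set Ω) : Ω → ℝ := A.indicator 1

section Helpers
variable {Ω 𝒳 : Type*}
lemma measurable_tup [MeasurableSpace Ω] [MeasurableSpace 𝒳] {X : ℕ → Ω → 𝒳}
    (hX : ∀ t, Measurable (X t)) (s n : ℕ) : Measurable (tup X s n) :=
  measurable_pi_lambda _ fun _ => hX _
lemma ind_inter (A B : Set Ω) : ind (A ∩ B) = ind A * ind B := by
  funext ω
  by_cases hA : ω ∈ A <;> by_cases hB : ω ∈ B <;>
    simp [ind, Set.indicator_apply, hA, hB]
lemma norm_ind_le (A : Set Ω) (ω : Ω) : ‖ind A ω‖ ≤ 1 := by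
  by_cases hA : ω ∈ A <;> simp [ind, Set.indicator_apply, hA]
lemma integrable_ind [MeasurableSpace Ω] {μ : Measure Ω} [IsFiniteMeasure μ] {A : Set Ω}
    (hA : MeasurableSet A) : Integrable (ind A) μ :=
  (integrable_const (1:ℝ)).indicator hA
lemma stronglyMeasurable_ind {m : MeasurableSpace Ω} {A : Set Ω} (hA : MeasurableSet[m] A) :
    StronglyMeasurable[m] (ind A) :=
  stronglyMeasurable_const.indicator hA
lemma exists_countable_piSystem (H : Type*) [m : MeasurableSpace H]
    [MeasurableSpace.CountablyGenerated H] :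
    ∃ C : Set (Set H), C.Countable ∧ IsPiSystem C ∧ MeasurableSpace.generateFrom C = m ∧
      ∀ s ∈ C, MeasurableSet s := by
  obtain ⟨f, hf⟩ := (MeasurableSpace.countable_countableGeneratingSet (α := H)).exists_eq_range
    MeasurableSpace.nonempty_countableGeneratingSet
  refine ⟨Set.range (fun F : Finset ℕ => ⋂ i ∈ F, f i), Set.countable_range _, ?_, ?_, ?_⟩
  · rintro s ⟨F, rfl⟩ t ⟨G, rfl⟩ -
    refine ⟨F ∪ G, ?_⟩
    ext x; simp [Finset.mem_union, or_imp, forall_and]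
  · have hmeas : ∀ i, MeasurableSet (f i) := by
      intro i
      exact MeasurableSpace.measurableSet_countableGeneratingSet (hf ▸ Set.mem_range_self i)
    refine le_antisymm (MeasurableSpace.generateFrom_le ?_) ?_
    · rintro s ⟨F, rfl⟩
      exact MeasurableSet.biInter F.countable_toSet fun i _ => hmeas i
    · rw [← MeasurableSpace.generateFrom_countableGeneratingSet (α := H)]
      refine MeasurableSpace.generateFrom_mono ?_
      intro s hs
      obtain ⟨i, rfl⟩ := hf ▸ hs
      exact ⟨{i}, by simp⟩
  · rintro s ⟨F, rfl⟩
    refine MeasurableSet.biInter F.countable_toSet fun i _ => ?_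
    exact MeasurableSpace.measurableSet_countableGeneratingSet (hf ▸ Set.mem_range_self i)
end Helpers

/-- If next-token consistency holds for all `1 ≤ t ≤ T-1` and transition
consistency holds for all `1 ≤ t ≤ T-2`, then for every `1 ≤ t ≤ T-1` the σ-algebras
`σ(X_{t+1:T})` and `σ(X_{1:t})` are conditionally independent given `σ(h t)`. -/
theorem nextlat_yields_condIndep
    {Ω 𝒳 H : Type*}
    [MeasurableSpace Ω] [StandardBorelSpace Ω] [Nonempty Ω]
    [MeasurableSpace 𝒳] [DiscreteMeasurableSpace 𝒳]
    [Fintype 𝒳] [Nonempty 𝒳]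
    [MeasurableSpace H] [StandardBorelSpace H]
    (μ : Measure Ω) [IsProbabilityMeasure μ]
    (T : ℕ) (hT : 2 ≤ T)
    (X : ℕ → Ω → 𝒳) (hX : ∀ t, Measurable (X t))
    (h : ℕ → Ω → H) (g : (t : ℕ) → (Fin t → 𝒳) → H)
    (hg : ∀ t, 1 ≤ t → t ≤ T → Measurable (g t))
    (hgh : ∀ t, 1 ≤ t → t ≤ T → ∀ ω, h t ω = g t (tup X 0 t ω))
    -- next-token consistency at every time `1 ≤ t ≤ T-1`
    (hnext : ∀ t, 1 ≤ t → t ≤ T - 1 → ∀ a : 𝒳,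
      (μ[ind {ω | X (t + 1) ω = a} | MeasurableSpace.comap (h t) inferInstance])
        =ᵐ[μ]
      (μ[ind {ω | X (t + 1) ω = a} | MeasurableSpace.comap (tup X 0 t) inferInstance]))
    -- transition consistency at every time `1 ≤ t ≤ T-2`
    (htrans : ∀ t, 1 ≤ t → t ≤ T - 2 → ∀ B : Set H, MeasurableSet B →
      (μ[ind {ω | h (t + 1) ω ∈ B} |
          MeasurableSpace.comap (fun ω => (h t ω, X (t + 1) ω)) inferInstance])
        =ᵐ[μ]
      (μ[ind {ω | h (t + 1) ω ∈ B} |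
          MeasurableSpace.comap (tup X 0 (t + 1)) inferInstance])) :
    -- conclusion: conditional independence of future and past given `σ(h t)`
    ∀ t, 1 ≤ t → t ≤ T - 1 →
      ∀ A B : Set Ω,
        MeasurableSet[MeasurableSpace.comap (tup X t (T - t)) inferInstance] A →
        MeasurableSet[MeasurableSpace.comap (tup X 0 t) inferInstance] B →
        (μ[ind (A ∩ B) | MeasurableSpace.comap (h t) inferInstance])
          =ᵐ[μ]
        (μ[ind A | MeasurableSpace.comap (h t) inferInstance]) *
          (μ[ind B | MeasurableSpace.comap (h t) inferInstance]) := by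
  
  classical
  haveI : Nonempty H := Nonempty.map (h 1) ‹Nonempty Ω›
  have htup : ∀ s n, Measurable (tup X s n) := fun s n => measurable_tup hX s n
  have hhm : ∀ t, 1 ≤ t → t ≤ T → Measurable (h t) := by
    intro t h1 h2
    have he : h t = fun ω => g t (tup X 0 t ω) := funext (hgh t h1 h2)
    rw [he]; exact (hg t h1 h2).comp (htup 0 t)
  have hMF : ∀ t, 1 ≤ t → t ≤ T →
      MeasurableSpace.comap (h t) inferInstance ≤
        MeasurableSpace.comap (tup X 0 t) inferInstance := by
    intro t h1 h2
    have hco : h t = g t ∘ tup X 0 t := funext (hgh t h1 h2)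
    rw [hco, ← MeasurableSpace.comap_comp]
    exact MeasurableSpace.comap_mono (hg t h1 h2).comap_le
  have hFmono : ∀ t, MeasurableSpace.comap (tup X 0 t) inferInstance ≤
      (MeasurableSpace.comap (tup X 0 (t + 1)) inferInstance : MeasurableSpace Ω) := by
    intro t
    have he : tup X 0 t =
        (fun (w : Fin (t + 1) → 𝒳) (i : Fin t) => w ⟨i.1, by omega⟩) ∘ tup X 0 (t + 1) := by
      funext ω i; rfl
    rw [he, ← MeasurableSpace.comap_comp]
    exact MeasurableSpace.comap_mono
      (measurable_pi_lambda _ fun i => measurable_pi_apply _).comap_le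
  have hXev : ∀ (t : ℕ) (a : 𝒳),
      MeasurableSet[MeasurableSpace.comap (tup X 0 (t + 1)) inferInstance]
        {ω | X (t + 1) ω = a} := by
    intro t a
    refine ⟨{w : Fin (t + 1) → 𝒳 | w ⟨t, by omega⟩ = a}, ?_, ?_⟩
    · exact (measurableSet_singleton a).preimage (measurable_pi_apply _)
    · have hidx : 0 + 1 + t = t + 1 := by omega
      ext ω
      simp only [Set.mem_preimage, Set.mem_setOf_eq, tup, hidx]
  -- the key induction
  have KEY : ∀ k t, 1 ≤ t → t ≤ T - 1 → T - 1 - t = k → ∀ v : Fin (T - t) → 𝒳,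
      (μ[ind (tup X t (T - t) ⁻¹' {v}) | MeasurableSpace.comap (tup X 0 t) inferInstance])
        =ᵐ[μ]
      (μ[ind (tup X t (T - t) ⁻¹' {v}) | MeasurableSpace.comap (h t) inferInstance]) := by
    intro k
    induction k with
    | zero =>
      intro t h1 h2 hk v
      have h0 : 0 < T - t := by omega
      have hTt : T - t = 1 := by omega
      have hset : tup X t (T - t) ⁻¹' {v} = {ω | X (t + 1) ω = v ⟨0, h0⟩} := by
        ext ω
        simp only [Set.mem_preimage, Set.mem_singleton_iff, Set.mem_setOf_eq, funext_iff, tup]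
        constructor
        · intro hv
          have := hv ⟨0, h0⟩
          simpa using this
        · intro hv i
          have h2i : (i : ℕ) < 1 := hTt ▸ i.isLt
          have hi : i = ⟨0, h0⟩ := Fin.ext (by omega)
          subst hi; simpa using hv
      rw [hset]
      exact (hnext t h1 h2 (v ⟨0, h0⟩)).symm
    | succ k ih =>
      intro t h1 h2 hk v
      have ht2 : t ≤ T - 2 := by omega
      have h1' : 1 ≤ t + 1 := by omega
      have h2' : t + 1 ≤ T - 1 := by omega
      have hk' : T - 1 - (t + 1) = k := by omega
      have h0 : 0 < T - t := by omega
      have h1T : t ≤ T := by omega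
      have h1T' : t + 1 ≤ T := by omega
      set n := T - (t + 1) with hn
      set a := v ⟨0, h0⟩ with ha
      set v' : Fin n → 𝒳 := fun i => v ⟨i.1 + 1, by have := i.isLt; omega⟩ with hv'
      set E : Set Ω := {ω | X (t + 1) ω = a} with hE
      set A' : Set Ω := tup X (t + 1) n ⁻¹' {v'} with hA'
      have hsplit : tup X t (T - t) ⁻¹' {v} = E ∩ A' := by
        ext ω
        simp only [Set.mem_preimage, Set.mem_singleton_iff, Set.mem_inter_iff, hE, hA', hv',
          Set.mem_setOf_eq, funext_iff, tup]
        constructor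
        · intro hv
          constructor
          · have := hv ⟨0, h0⟩
            simpa [ha] using this
          · intro i
            have hlt : (i : ℕ) + 1 < T - t := by have := i.isLt; omega
            have h2i := hv ⟨(i : ℕ) + 1, hlt⟩
            have hidx : t + 1 + ((i : ℕ) + 1) = t + 1 + 1 + (i : ℕ) := by omega
            rw [hidx] at h2i
            exact h2i
        · rintro ⟨hva, hvr⟩ i
          rcases Nat.eq_zero_or_pos (i : ℕ) with h0i | hpos
          · have hi : i = ⟨0, h0⟩ := Fin.ext h0i
            subst hi
            simpa [ha] using hva
          · have hlt : (i : ℕ) - 1 < n := by have := i.isLt; omega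
            have h2i := hvr ⟨(i : ℕ) - 1, hlt⟩
            have hidx : t + 1 + 1 + ((i : ℕ) - 1) = t + 1 + (i : ℕ) := by omega
            rw [hidx] at h2i
            have hvv : v ⟨(i : ℕ) - 1 + 1, by have := i.isLt; omega⟩ = v i := by
              congr 1
              apply Fin.ext
              simp only []
              omega
            rw [hvv] at h2i
            exact h2i
      rw [hsplit, ind_inter]
      have hYm : Measurable (h (t + 1)) := hhm (t + 1) h1' h1T'
      have hhtm : Measurable (h t) := hhm t h1 h1T
      have hWm : Measurable (tup X 0 (t + 1)) := htup 0 (t + 1)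
      set P : Ω → H × 𝒳 := fun ω => (h t ω, X (t + 1) ω) with hP
      have hPm : Measurable P := hhtm.prodMk (hX (t + 1))
      have hmeasE : MeasurableSet E := (hX (t + 1)) (measurableSet_singleton a)
      have hmeasA' : MeasurableSet A' := (htup (t + 1) n) (measurableSet_singleton v')
      have iA' : Integrable (ind A') μ := integrable_ind hmeasA'
      set φ : H → ℝ :=
        fun z => (condDistrib (tup X (t + 1) n) (h (t + 1)) μ z {v'}).toReal with hφ
      have hφm : Measurable φ :=
        (Kernel.measurable_coe _ (measurableSet_singleton v')).ennreal_toReal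
      have hφ1 : ∀ z, ‖φ z‖ ≤ 1 := by
        intro z
        rw [hφ, Real.norm_eq_abs, abs_of_nonneg ENNReal.toReal_nonneg]
        calc (condDistrib (tup X (t + 1) n) (h (t + 1)) μ z {v'}).toReal
            ≤ (1 : ENNReal).toReal := ENNReal.toReal_mono (by simp) prob_le_one
          _ = 1 := by simp
      have step2 : (μ[ind A' | MeasurableSpace.comap (h (t + 1)) inferInstance]) =ᵐ[μ]
          fun ω => φ (h (t + 1) ω) :=
        (condDistrib_ae_eq_condExp (μ := μ) hYm (htup (t + 1) n)
          (measurableSet_singleton v')).symm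
      obtain ⟨C, hCc, hCpi, hCgen, hCmeas⟩ := exists_countable_piSystem H
      have hker : ∀ᵐ ω ∂μ,
          condDistrib (h (t + 1)) (tup X 0 (t + 1)) μ (tup X 0 (t + 1) ω)
            = condDistrib (h (t + 1)) P μ (P ω) := by
        have hB : ∀ B : Set H, MeasurableSet B → ∀ᵐ ω ∂μ,
            condDistrib (h (t + 1)) (tup X 0 (t + 1)) μ (tup X 0 (t + 1) ω) B
              = condDistrib (h (t + 1)) P μ (P ω) B := by
          intro B hBm
          have e1 := condDistrib_ae_eq_condExp (μ := μ) hWm hYm hBm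
          have e2 := condDistrib_ae_eq_condExp (μ := μ) hPm hYm hBm
          have e3 := htrans t h1 ht2 B hBm
          filter_upwards [e1, e2, e3] with ω f1 f2 f3
          have heq : (condDistrib (h (t + 1)) (tup X 0 (t + 1)) μ (tup X 0 (t + 1) ω) B).toReal
              = (condDistrib (h (t + 1)) P μ (P ω) B).toReal := by
            rw [← measureReal_def, ← measureReal_def, f1, f2]
            exact f3.symm
          exact (ENNReal.toReal_eq_toReal_iff' (measure_ne_top _ _) (measure_ne_top _ _)).mp heq
        have hallC : ∀ᵐ ω ∂μ, ∀ s ∈ C,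
            condDistrib (h (t + 1)) (tup X 0 (t + 1)) μ (tup X 0 (t + 1) ω) s
              = condDistrib (h (t + 1)) P μ (P ω) s :=
          (ae_ball_iff hCc).2 fun s hs => hB s (hCmeas s hs)
        filter_upwards [hallC] with ω hω
        refine ext_of_generate_finite C hCgen.symm hCpi (fun s hs => hω s hs) ?_
        simp
      have hφint : Integrable (fun ω => φ (h (t + 1) ω)) μ :=
        (integrable_const (1 : ℝ)).mono' (hφm.comp hYm).aestronglyMeasurable
          (Filter.Eventually.of_forall fun ω => by simpa using hφ1 (h (t + 1) ω))
      set ψ : H × 𝒳 → ℝ := fun p => ∫ z, φ z ∂(condDistrib (h (t + 1)) P μ p) with hψ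
      have hψm : Measurable ψ := by
        have hsm := StronglyMeasurable.integral_kernel_prod_right'
          (κ := condDistrib (h (t + 1)) P μ)
          (f := fun q : (H × 𝒳) × H => φ q.2) ((hφm.comp measurable_snd).stronglyMeasurable)
        exact hsm.measurable
      have hψ1 : ∀ p, ‖ψ p‖ ≤ 1 := by
        intro p
        have hintφ : Integrable φ (condDistrib (h (t + 1)) P μ p) :=
          (integrable_const (1 : ℝ)).mono' hφm.aestronglyMeasurable
            (Filter.Eventually.of_forall fun z => by simpa using hφ1 z)
        calc ‖ψ p‖ ≤ ∫ z, ‖φ z‖ ∂(condDistrib (h (t + 1)) P μ p) :=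
              norm_integral_le_integral_norm _
          _ ≤ ∫ _, (1 : ℝ) ∂(condDistrib (h (t + 1)) P μ p) :=
              integral_mono hintφ.norm (integrable_const _) fun z => hφ1 z
          _ = 1 := by simp
      have e4 : (μ[(fun ω => φ (h (t + 1) ω)) |
            MeasurableSpace.comap (tup X 0 (t + 1)) inferInstance]) =ᵐ[μ]
          fun ω => ∫ z, φ z ∂(condDistrib (h (t + 1)) (tup X 0 (t + 1)) μ (tup X 0 (t + 1) ω)) :=
        condExp_ae_eq_integral_condDistrib hWm hYm.aemeasurable hφm.stronglyMeasurable hφint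
      have step3 : (μ[(fun ω => φ (h (t + 1) ω)) |
            MeasurableSpace.comap (tup X 0 (t + 1)) inferInstance]) =ᵐ[μ]
          fun ω => ψ (P ω) := by
        filter_upwards [e4, hker] with ω f4 fk
        rw [f4, hψ, fk]
      have hF1le : (MeasurableSpace.comap (tup X 0 (t + 1)) inferInstance :
          MeasurableSpace Ω) ≤ ‹MeasurableSpace Ω› := hWm.comap_le
      have hFtle : (MeasurableSpace.comap (tup X 0 t) inferInstance :
          MeasurableSpace Ω) ≤ ‹MeasurableSpace Ω› := (htup 0 t).comap_le
      have hF01 := hFmono t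
      have hMle : MeasurableSpace.comap (h t) inferInstance ≤
          MeasurableSpace.comap (tup X 0 t) inferInstance := hMF t h1 h1T
      have hEsm1 : StronglyMeasurable[MeasurableSpace.comap (tup X 0 (t + 1)) inferInstance]
          (ind E) := stronglyMeasurable_ind (hXev t a)
      have iEA' : Integrable (ind E * ind A') μ := by
        rw [← ind_inter]; exact integrable_ind (hmeasE.inter hmeasA')
      have sA : (μ[ind E * ind A' | MeasurableSpace.comap (tup X 0 t) inferInstance]) =ᵐ[μ]
          (μ[(μ[ind E * ind A' | MeasurableSpace.comap (tup X 0 (t + 1)) inferInstance]) |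
            MeasurableSpace.comap (tup X 0 t) inferInstance]) :=
        (condExp_condExp_of_le hF01 hF1le).symm
      have sB : (μ[ind E * ind A' | MeasurableSpace.comap (tup X 0 (t + 1)) inferInstance])
          =ᵐ[μ] ind E * (μ[ind A' | MeasurableSpace.comap (tup X 0 (t + 1)) inferInstance]) :=
        condExp_mul_of_stronglyMeasurable_left hEsm1 iEA' iA'
      have ihA' := ih (t + 1) h1' h2' hk' v'
      have sC : (μ[ind A' | MeasurableSpace.comap (tup X 0 (t + 1)) inferInstance]) =ᵐ[μ]
          fun ω => φ (h (t + 1) ω) := ihA'.trans step2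
      have sD : (μ[ind E * ind A' | MeasurableSpace.comap (tup X 0 (t + 1)) inferInstance])
          =ᵐ[μ] ind E * fun ω => φ (h (t + 1) ω) :=
        sB.trans (Filter.EventuallyEq.mul Filter.EventuallyEq.rfl sC)
      have sE : (μ[ind E * ind A' | MeasurableSpace.comap (tup X 0 t) inferInstance]) =ᵐ[μ]
          (μ[(ind E * fun ω => φ (h (t + 1) ω)) |
            MeasurableSpace.comap (tup X 0 t) inferInstance]) :=
        sA.trans (condExp_congr_ae sD)
      have iEφ : Integrable (ind E * fun ω => φ (h (t + 1) ω)) μ :=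
        hφint.bdd_mul (stronglyMeasurable_ind hmeasE).aestronglyMeasurable (ae_of_all _ (norm_ind_le E))
      have sF : (μ[(ind E * fun ω => φ (h (t + 1) ω)) |
            MeasurableSpace.comap (tup X 0 t) inferInstance]) =ᵐ[μ]
          (μ[(μ[(ind E * fun ω => φ (h (t + 1) ω)) |
            MeasurableSpace.comap (tup X 0 (t + 1)) inferInstance]) |
            MeasurableSpace.comap (tup X 0 t) inferInstance]) :=
        (condExp_condExp_of_le hF01 hF1le).symm
      have sG : (μ[(ind E * fun ω => φ (h (t + 1) ω)) |
            MeasurableSpace.comap (tup X 0 (t + 1)) inferInstance]) =ᵐ[μ]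
          ind E * (μ[(fun ω => φ (h (t + 1) ω)) |
            MeasurableSpace.comap (tup X 0 (t + 1)) inferInstance]) :=
        condExp_mul_of_stronglyMeasurable_left hEsm1 iEφ hφint
      have sH : (μ[(ind E * fun ω => φ (h (t + 1) ω)) |
            MeasurableSpace.comap (tup X 0 (t + 1)) inferInstance]) =ᵐ[μ]
          ind E * fun ω => ψ (P ω) :=
        sG.trans (Filter.EventuallyEq.mul Filter.EventuallyEq.rfl step3)
      have e9 : (ind E * fun ω => ψ (P ω)) = (fun ω => ψ (h t ω, a)) * ind E := by
        funext ω
        by_cases hω : X (t + 1) ω = a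
        · have hPa : P ω = (h t ω, a) := by rw [hP]; simp [hω]
          simp only [Pi.mul_apply, hPa, mul_comm]
        · have hz : ind E ω = 0 := by simp [ind, Set.indicator_apply, hE, hω]
          simp only [Pi.mul_apply, hz, zero_mul, mul_zero]
      have sI : (μ[ind E * ind A' | MeasurableSpace.comap (tup X 0 t) inferInstance]) =ᵐ[μ]
          (μ[((fun ω => ψ (h t ω, a)) * ind E) |
            MeasurableSpace.comap (tup X 0 t) inferInstance]) :=
        sE.trans (sF.trans (condExp_congr_ae (sH.trans (by rw [e9]))))
      have hψa_smM : StronglyMeasurable[MeasurableSpace.comap (h t) inferInstance]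
          (fun ω => ψ (h t ω, a)) :=
        ((hψm.comp measurable_prodMk_right).comp
          (Measurable.of_comap_le le_rfl)).stronglyMeasurable
      have hψa_sm : StronglyMeasurable[MeasurableSpace.comap (tup X 0 t) inferInstance]
          (fun ω => ψ (h t ω, a)) :=
        (((hψm.comp measurable_prodMk_right).comp
          (Measurable.of_comap_le le_rfl)).mono hMle le_rfl).stronglyMeasurable
      have iψaE : Integrable ((fun ω => ψ (h t ω, a)) * ind E) μ :=
        (integrable_ind hmeasE).bdd_mul
          ((hψm.comp (hhtm.prodMk measurable_const)).aestronglyMeasurable)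
          (ae_of_all _ fun ω => hψ1 _)
      have iE : Integrable (ind E) μ := integrable_ind hmeasE
      have sJ : (μ[((fun ω => ψ (h t ω, a)) * ind E) |
            MeasurableSpace.comap (tup X 0 t) inferInstance]) =ᵐ[μ]
          (fun ω => ψ (h t ω, a)) * (μ[ind E |
            MeasurableSpace.comap (tup X 0 t) inferInstance]) :=
        condExp_mul_of_stronglyMeasurable_left hψa_sm iψaE iE
      have sK : (μ[ind E | MeasurableSpace.comap (tup X 0 t) inferInstance]) =ᵐ[μ]
          (μ[ind E | MeasurableSpace.comap (h t) inferInstance]) := (hnext t h1 h2 a).symm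
      have sL : (fun ω => ψ (h t ω, a)) *
            (μ[ind E | MeasurableSpace.comap (tup X 0 t) inferInstance]) =ᵐ[μ]
          (fun ω => ψ (h t ω, a)) * (μ[ind E | MeasurableSpace.comap (h t) inferInstance]) :=
        Filter.EventuallyEq.mul Filter.EventuallyEq.rfl sK
      have chain : (μ[ind E * ind A' | MeasurableSpace.comap (tup X 0 t) inferInstance]) =ᵐ[μ]
          (fun ω => ψ (h t ω, a)) * (μ[ind E | MeasurableSpace.comap (h t) inferInstance]) :=
        sI.trans (sJ.trans sL)
      have hZsm : StronglyMeasurable[MeasurableSpace.comap (h t) inferInstance]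
          ((fun ω => ψ (h t ω, a)) * (μ[ind E | MeasurableSpace.comap (h t) inferInstance])) :=
        hψa_smM.mul stronglyMeasurable_condExp
      have hZint : Integrable
          ((fun ω => ψ (h t ω, a)) * (μ[ind E | MeasurableSpace.comap (h t) inferInstance])) μ :=
        integrable_condExp.bdd_mul
          ((hψm.comp (hhtm.prodMk measurable_const)).aestronglyMeasurable)
          (ae_of_all _ fun ω => hψ1 _)
      have hMle0 : MeasurableSpace.comap (h t) inferInstance ≤ ‹MeasurableSpace Ω› :=
        hMle.trans hFtle
      have sM : (μ[ind E * ind A' | MeasurableSpace.comap (h t) inferInstance]) =ᵐ[μ]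
          (μ[(μ[ind E * ind A' | MeasurableSpace.comap (tup X 0 t) inferInstance]) |
            MeasurableSpace.comap (h t) inferInstance]) :=
        (condExp_condExp_of_le hMle hFtle).symm
      have sN : (μ[(μ[ind E * ind A' | MeasurableSpace.comap (tup X 0 t) inferInstance]) |
            MeasurableSpace.comap (h t) inferInstance]) =ᵐ[μ]
          (μ[((fun ω => ψ (h t ω, a)) *
            (μ[ind E | MeasurableSpace.comap (h t) inferInstance])) |
            MeasurableSpace.comap (h t) inferInstance]) :=
        condExp_congr_ae chain
      have sO : (μ[((fun ω => ψ (h t ω, a)) *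
            (μ[ind E | MeasurableSpace.comap (h t) inferInstance])) |
            MeasurableSpace.comap (h t) inferInstance]) =
          (fun ω => ψ (h t ω, a)) * (μ[ind E | MeasurableSpace.comap (h t) inferInstance]) :=
        condExp_of_stronglyMeasurable hMle0 hZsm hZint
      exact chain.trans (((sM.trans sN).trans (by rw [sO])).symm)
  -- extension to all future-measurable sets
  have KEY' : ∀ t, 1 ≤ t → t ≤ T - 1 → ∀ A : Set Ω,
      MeasurableSet[MeasurableSpace.comap (tup X t (T - t)) inferInstance] A →
      (μ[ind A | MeasurableSpace.comap (tup X 0 t) inferInstance]) =ᵐ[μ]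
      (μ[ind A | MeasurableSpace.comap (h t) inferInstance]) := by
    intro t h1 h2 A hA
    obtain ⟨S, hS, rfl⟩ := hA
    have hsum : ind (tup X t (T - t) ⁻¹' S) =
        ∑ v ∈ S.toFinset, ind (tup X t (T - t) ⁻¹' {v}) := by
      funext ω
      simp only [ind, Set.indicator_apply, Set.mem_preimage, Finset.sum_apply,
        Set.mem_singleton_iff, Pi.one_apply]
      by_cases hω : tup X t (T - t) ω ∈ S
      · rw [if_pos hω, Finset.sum_eq_single (tup X t (T - t) ω)]
        · simp
        · intro b _ hb
          rw [if_neg (fun hc => hb hc.symm)]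
        · intro hmem
          exact absurd (Set.mem_toFinset.2 hω) hmem
      · rw [if_neg hω, eq_comm]
        refine Finset.sum_eq_zero fun v hv => ?_
        rw [if_neg]
        intro hc
        exact hω (hc ▸ Set.mem_toFinset.1 hv)
    rw [hsum]
    have hint : ∀ v : Fin (T - t) → 𝒳, Integrable (ind (tup X t (T - t) ⁻¹' {v})) μ :=
      fun v => integrable_ind ((htup t (T - t)) (measurableSet_singleton v))
    have cs1 := condExp_finsetSum (μ := μ)
      (m := MeasurableSpace.comap (tup X 0 t) inferInstance)
      (s := S.toFinset) (f := fun v => ind (tup X t (T - t) ⁻¹' {v})) (fun v _ => hint v)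
    have cs2 := condExp_finsetSum (μ := μ)
      (m := MeasurableSpace.comap (h t) inferInstance)
      (s := S.toFinset) (f := fun v => ind (tup X t (T - t) ⁻¹' {v})) (fun v _ => hint v)
    have h2' : ∀ᵐ ω ∂μ, ∀ v ∈ S.toFinset,
        (μ[ind (tup X t (T - t) ⁻¹' {v}) | MeasurableSpace.comap (tup X 0 t) inferInstance]) ω =
        (μ[ind (tup X t (T - t) ⁻¹' {v}) | MeasurableSpace.comap (h t) inferInstance]) ω :=
      (ae_ball_iff S.toFinset.countable_toSet).2 fun v _ => KEY (T - 1 - t) t h1 h2 rfl v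
    filter_upwards [cs1, cs2, h2'] with ω e1 e2 e3
    rw [e1, e2, Finset.sum_apply, Finset.sum_apply]
    exact Finset.sum_congr rfl fun v hv => e3 v hv
  -- conclusion
  intro t h1 h2 A B hA hB
  have h2T : t ≤ T := by omega
  have hMle : MeasurableSpace.comap (h t) inferInstance ≤
      MeasurableSpace.comap (tup X 0 t) inferInstance := hMF t h1 h2T
  have hFle : (MeasurableSpace.comap (tup X 0 t) inferInstance : MeasurableSpace Ω) ≤
      ‹MeasurableSpace Ω› := (htup 0 t).comap_le
  have hAamb : MeasurableSet A := (htup t (T - t)).comap_le A hA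
  have hBamb : MeasurableSet B := hFle B hB
  have iA : Integrable (ind A) μ := integrable_ind hAamb
  have iB : Integrable (ind B) μ := integrable_ind hBamb
  have key := KEY' t h1 h2 A hA
  have hBsm : StronglyMeasurable[MeasurableSpace.comap (tup X 0 t) inferInstance] (ind B) :=
    stronglyMeasurable_ind hB
  have iBA : Integrable (ind B * ind A) μ := by
    rw [← ind_inter]; exact integrable_ind (hBamb.inter hAamb)
  have e0 : ind (A ∩ B) = ind B * ind A := by rw [← ind_inter, Set.inter_comm]
  have t1 : (μ[ind (A ∩ B) | MeasurableSpace.comap (h t) inferInstance]) =ᵐ[μ]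
      (μ[(μ[ind (A ∩ B) | MeasurableSpace.comap (tup X 0 t) inferInstance]) |
        MeasurableSpace.comap (h t) inferInstance]) :=
    (condExp_condExp_of_le hMle hFle).symm
  have t2 : (μ[ind (A ∩ B) | MeasurableSpace.comap (tup X 0 t) inferInstance]) =ᵐ[μ]
      ind B * (μ[ind A | MeasurableSpace.comap (tup X 0 t) inferInstance]) := by
    rw [e0]; exact condExp_mul_of_stronglyMeasurable_left hBsm iBA iA
  have t3 : ind B * (μ[ind A | MeasurableSpace.comap (tup X 0 t) inferInstance]) =ᵐ[μ]
      ind B * (μ[ind A | MeasurableSpace.comap (h t) inferInstance]) :=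
    Filter.EventuallyEq.mul Filter.EventuallyEq.rfl key
  have e4 : ind B * (μ[ind A | MeasurableSpace.comap (h t) inferInstance]) =
      (μ[ind A | MeasurableSpace.comap (h t) inferInstance]) * ind B := mul_comm _ _
  have icB : Integrable ((μ[ind A | MeasurableSpace.comap (h t) inferInstance]) * ind B) μ := by
    rw [← e4]
    exact integrable_condExp.bdd_mul (stronglyMeasurable_ind hBamb).aestronglyMeasurable
      (ae_of_all _ (norm_ind_le B))
  have t4 : (μ[(μ[ind A | MeasurableSpace.comap (h t) inferInstance]) * ind B |
        MeasurableSpace.comap (h t) inferInstance]) =ᵐ[μ]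
      (μ[ind A | MeasurableSpace.comap (h t) inferInstance]) *
        (μ[ind B | MeasurableSpace.comap (h t) inferInstance]) :=
    condExp_mul_of_stronglyMeasurable_left stronglyMeasurable_condExp icB iB
  refine t1.trans ((condExp_congr_ae ((t2.trans t3).trans (by rw [e4]))).trans t4)
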